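/- (Telescoping PRDS inequality.) Let q ∈ (0,1), m, m_i ≥ 1, and suppose events D_k (k = 1,...,m) with D_k ⊆ D_{k+1}, C_{k+1} = D_{k+1} \ D_k, C_1 = D_1, satisfy the monotone conditioning property Pr(D_k | P ≤ α) ≤ Pr(D_k | P ≤ α') for all α ≤ α' and each k, where P is a random variable with Pr(P ≤ α) > 0 for α > 0. Then Σ_{k=1}^m Pr( C_k | P ≤ kq/(m·m_i) ) ≤ Pr( D_m | P ≤ q/m_i ) ≤ 1. -/

import Mathlib

open MeasureTheory ProbabilityTheory

/-- The telescoping PRDS inequality (Appendix D, case (1)): for nested events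
`D 1 ⊆ D 2 ⊆ …` with differences `C (k+1) = D (k+1) \ D k`, `C 1 = D 1`, if the
conditional probability `Pr(D k | P ≤ α)` is nondecreasing in `α`, then
`Σ_{k=1}^m Pr(C k | P ≤ kq/(m mᵢ)) ≤ Pr(D m | P ≤ q/mᵢ) ≤ 1`. -/
theorem stmt14 {Ω : Type*} [MeasurableSpace Ω] (μ : Measure Ω) [IsProbabilityMeasure μ]
    (q : ℝ) (hq0 : 0 < q) (hq1 : q < 1) (m mi : ℕ) (hm : 1 ≤ m) (hmi : 1 ≤ mi)
    (P : Ω → ℝ) (hPmeas : Measurable P)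
    (hpos : ∀ α : ℝ, 0 < α → μ {ω | P ω ≤ α} ≠ 0)
    (D C : ℕ → Set Ω) (hDmeas : ∀ k, MeasurableSet (D k)) (hCmeas : ∀ k, MeasurableSet (C k))
    (hnested : ∀ k, D k ⊆ D (k + 1))
    (hC1 : C 1 = D 1) (hCk : ∀ k, 1 ≤ k → C (k + 1) = D (k + 1) \ D k)
    (hcond : ∀ k, ∀ α α' : ℝ, 0 < α → α ≤ α' →
      μ[|{ω | P ω ≤ α}] (D k) ≤ μ[|{ω | P ω ≤ α'}] (D k)) :
    (∑ k ∈ Finset.Icc 1 m, μ[|{ω | P ω ≤ k * q / (m * mi)}] (C k))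
      ≤ μ[|{ω | P ω ≤ q / mi}] (D m) ∧
    μ[|{ω | P ω ≤ q / mi}] (D m) ≤ 1 := by
  have hmpos : (0:ℝ) < (m : ℝ) := by exact_mod_cast hm
  have hmipos : (0:ℝ) < (mi : ℝ) := by exact_mod_cast hmi
  have hdenom : (0:ℝ) < (m : ℝ) * mi := by positivity
  have hαpos : ∀ k : ℕ, 1 ≤ k → (0:ℝ) < k * q / (m * mi) := by
    intro k hk
    have : (0:ℝ) < (k:ℝ) := by exact_mod_cast hk
    positivity
  -- main induction
  have key : ∀ n : ℕ, 1 ≤ n →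
      (∑ k ∈ Finset.Icc 1 n, μ[|{ω | P ω ≤ k * q / (m * mi)}] (C k))
        ≤ μ[|{ω | P ω ≤ n * q / (m * mi)}] (D n) := by
    intro n hn
    induction n with
    | zero => omega
    | succ n ih =>
      rcases Nat.eq_or_lt_of_le hn with h1 | h1
      · -- n + 1 = 1
        have hn0 : n = 0 := by omega
        subst hn0
        simp [hC1]
      · have hn1 : 1 ≤ n := by omega
        rw [Finset.sum_Icc_succ_top (by omega : 1 ≤ n + 1)]
        have hsubset : D n ⊆ D (n+1) := hnested n
        have hunion : D (n+1) = D n ∪ C (n+1) := by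
          rw [hCk n hn1, Set.union_diff_cancel hsubset]
        have hdisj : Disjoint (D n) (C (n+1)) := by
          rw [hCk n hn1]; exact Set.disjoint_sdiff_right
        have hle : (n:ℝ) * q / (m * mi) ≤ (↑(n+1):ℝ) * q / (m * mi) := by
          have h : (n:ℝ) * q ≤ (↑(n+1):ℝ) * q := by
            have : (n:ℝ) ≤ (↑(n+1):ℝ) := by exact_mod_cast Nat.le_succ n
            nlinarith
          gcongr
        calc (∑ k ∈ Finset.Icc 1 n, μ[|{ω | P ω ≤ k * q / (m * mi)}] (C k))
              + μ[|{ω | P ω ≤ (↑(n+1)) * q / (m * mi)}] (C (n+1))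
            ≤ μ[|{ω | P ω ≤ n * q / (m * mi)}] (D n)
              + μ[|{ω | P ω ≤ (↑(n+1)) * q / (m * mi)}] (C (n+1)) := by
              gcongr; exact ih hn1
          _ ≤ μ[|{ω | P ω ≤ (↑(n+1)) * q / (m * mi)}] (D n)
              + μ[|{ω | P ω ≤ (↑(n+1)) * q / (m * mi)}] (C (n+1)) := by
              gcongr ?_ + _
              exact hcond n _ _ (hαpos n hn1) hle
          _ = μ[|{ω | P ω ≤ (↑(n+1)) * q / (m * mi)}] (D (n+1)) := by
              rw [hunion, measure_union hdisj (hCmeas (n+1))]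
  have heq : (m:ℝ) * q / (m * mi) = q / mi := by
    field_simp
  have h1 := key m hm
  rw [heq] at h1
  refine ⟨h1, ?_⟩
  have : IsProbabilityMeasure (μ[|{ω | P ω ≤ q / mi}]) := by
    apply cond_isProbabilityMeasure
    exact hpos _ (by positivity)
  exact prob_le_one
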